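/- Let κ,ε>0, λ≥0, and let ρ : [0,1] → ℝ be a differentiable function whose derivative ρ_x is continuous and nowhere zero on [0,1]. Let v : [0,1] → ℝ be such that v/ρ_x is four times continuously differentiable, with v(0)=v(1)=0 and (v/ρ_x)''(0)=(v/ρ_x)''(1)=0. Then ∫₀¹ (Bv)(x) v(x) dx = ∫₀¹ [ε ((v/ρ_x)'')² + λ ((v/ρ_x)')² + (v/ρ_x)² (κ + ρ_x²)] dx ≥ 0, and equality holds if and only if v ≡ 0. In particular, B is strictly positive definite on L²(0,1). -/

import Mathlib

open MeasureTheory Set intervalIntegral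

/-- The operator `B` associated with the HV Hessian:
`Bv = (1/ρ_x)[ε (v/ρ_x)'''' − λ (v/ρ_x)'' + (v/ρ_x)(κ + ρ_x²)]`,
where `ρx` denotes the derivative `ρ_x`. -/
noncomputable def Bop (κ lam ε : ℝ) (ρx : ℝ → ℝ) (v : ℝ → ℝ) (x : ℝ) : ℝ :=
  (1 / ρx x) * (ε * iteratedDeriv 4 (fun y => v y / ρx y) x
    - lam * iteratedDeriv 2 (fun y => v y / ρx y) x
    + (v x / ρx x) * (κ + (ρx x) ^ 2))

/-- The operator `B` is strictly positive definite on `L²(0,1)`: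
`∫₀¹ (Bv) v = ∫₀¹ [ε ((v/ρ_x)'')² + λ ((v/ρ_x)')² + (v/ρ_x)²(κ + ρ_x²)] ≥ 0`,
with equality if and only if `v ≡ 0` on `[0,1]`. -/
theorem Bop_positive_definite
    (κ lam ε : ℝ) (hκ : 0 < κ) (hε : 0 < ε) (hlam : 0 ≤ lam)
    (ρ : ℝ → ℝ) (hρ : Differentiable ℝ ρ) (hρx : Continuous (deriv ρ))
    (hρxne : ∀ x ∈ Icc (0:ℝ) 1, deriv ρ x ≠ 0)
    (v : ℝ → ℝ)
    (hv : ContDiff ℝ 4 (fun x => v x / deriv ρ x))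
    (hv0 : v 0 = 0) (hv1 : v 1 = 0)
    (hv''0 : iteratedDeriv 2 (fun x => v x / deriv ρ x) 0 = 0)
    (hv''1 : iteratedDeriv 2 (fun x => v x / deriv ρ x) 1 = 0) :
    (∫ x in (0:ℝ)..1, Bop κ lam ε (deriv ρ) v x * v x
      = ∫ x in (0:ℝ)..1,
          (ε * (iteratedDeriv 2 (fun y => v y / deriv ρ y) x) ^ 2
            + lam * (deriv (fun y => v y / deriv ρ y) x) ^ 2
            + (v x / deriv ρ x) ^ 2 * (κ + (deriv ρ x) ^ 2))) ∧
    (0 ≤ ∫ x in (0:ℝ)..1, Bop κ lam ε (deriv ρ) v x * v x) ∧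
    ((∫ x in (0:ℝ)..1, Bop κ lam ε (deriv ρ) v x * v x) = 0 ↔
      ∀ x ∈ Icc (0:ℝ) 1, v x = 0) := by
  set w : ℝ → ℝ := (fun x => v x / deriv ρ x) with hW
  have hWx : ∀ x, v x / deriv ρ x = w x := fun _ => rfl
  -- continuity of derivatives of w
  have hc0 : Continuous w := hv.continuous
  have hc1 : Continuous (deriv w) := by
    have := hv.continuous_iteratedDeriv 1 (by norm_num)
    rwa [iteratedDeriv_one] at this
  have hc2 : Continuous (iteratedDeriv 2 w) := hv.continuous_iteratedDeriv 2 (by norm_num)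
  have hc3 : Continuous (iteratedDeriv 3 w) := hv.continuous_iteratedDeriv 3 (by norm_num)
  have hc4 : Continuous (iteratedDeriv 4 w) := hv.continuous_iteratedDeriv 4 (by norm_num)
  -- HasDerivAt facts
  have hd : ∀ n : ℕ, n < 4 → ∀ x : ℝ,
      HasDerivAt (iteratedDeriv n w) (iteratedDeriv (n + 1) w x) x := by
    intro n hn x
    rw [iteratedDeriv_succ]
    exact ((hv.differentiable_iteratedDeriv n (by exact_mod_cast hn)) x).hasDerivAt
  have hd0 : ∀ x : ℝ, HasDerivAt w (deriv w x) x := by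
    intro x
    have := hd 0 (by norm_num) x
    rwa [iteratedDeriv_zero, iteratedDeriv_one] at this
  -- boundary values of w
  have hw0 : w 0 = 0 := by simp [hW, hv0]
  have hw1 : w 1 = 0 := by simp [hW, hv1]
  -- integration by parts 1 : ∫ w * w'''' = ∫ (w'')^2
  have ibp1 : (∫ x in (0:ℝ)..1, w x * iteratedDeriv 4 w x)
      = ∫ x in (0:ℝ)..1, (iteratedDeriv 2 w x) ^ 2 := by
    have e1 : (∫ x in (0:ℝ)..1, w x * iteratedDeriv 4 w x)
        = w 1 * iteratedDeriv 3 w 1 - w 0 * iteratedDeriv 3 w 0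
          - ∫ x in (0:ℝ)..1, deriv w x * iteratedDeriv 3 w x := by
      refine integral_mul_deriv_eq_deriv_mul (fun x _ => hd0 x)
        (fun x _ => hd 3 (by norm_num) x) (hc1.intervalIntegrable _ _)
        (hc4.intervalIntegrable _ _)
    have e2 : (∫ x in (0:ℝ)..1, deriv w x * iteratedDeriv 3 w x)
        = deriv w 1 * iteratedDeriv 2 w 1 - deriv w 0 * iteratedDeriv 2 w 0
          - ∫ x in (0:ℝ)..1, iteratedDeriv 2 w x * iteratedDeriv 2 w x := by
      have hu : ∀ x ∈ uIcc (0:ℝ) 1, HasDerivAt (deriv w) (iteratedDeriv 2 w x) x := by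
        intro x _
        have := hd 1 (by norm_num) x
        rwa [iteratedDeriv_one] at this
      exact integral_mul_deriv_eq_deriv_mul hu (fun x _ => hd 2 (by norm_num) x)
        (hc2.intervalIntegrable _ _) (hc3.intervalIntegrable _ _)
    rw [e1, e2, hw0, hw1, hv''0, hv''1]
    simp only [hW]
    rw [intervalIntegral.integral_congr (g := fun x => (iteratedDeriv 2 w x) ^ 2)
      (fun x _ => by rw [← hW]; ring)]
    ring
  -- integration by parts 2 : ∫ w * w'' = - ∫ (w')^2
  have ibp2 : (∫ x in (0:ℝ)..1, w x * iteratedDeriv 2 w x)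
      = - ∫ x in (0:ℝ)..1, (deriv w x) ^ 2 := by
    have e1 : (∫ x in (0:ℝ)..1, w x * iteratedDeriv 2 w x)
        = w 1 * deriv w 1 - w 0 * deriv w 0
          - ∫ x in (0:ℝ)..1, deriv w x * deriv w x := by
      have hvv : ∀ x ∈ uIcc (0:ℝ) 1, HasDerivAt (deriv w) (iteratedDeriv 2 w x) x := by
        intro x _
        have := hd 1 (by norm_num) x
        rwa [iteratedDeriv_one] at this
      exact integral_mul_deriv_eq_deriv_mul (fun x _ => hd0 x) hvv
        (hc1.intervalIntegrable _ _) (hc2.intervalIntegrable _ _)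
    rw [e1, hw0, hw1]
    rw [intervalIntegral.integral_congr (g := fun x => (deriv w x) ^ 2)
      (fun x _ => by ring)]
    ring
  -- the main identity
  have hpt : ∀ x, Bop κ lam ε (deriv ρ) v x * v x
      = ε * (w x * iteratedDeriv 4 w x) - lam * (w x * iteratedDeriv 2 w x)
        + (w x) ^ 2 * (κ + (deriv ρ x) ^ 2) := by
    intro x
    simp only [Bop, hWx, ← hW, div_eq_mul_inv, one_div]
    ring
  have hInt0 : Continuous fun x => (w x) ^ 2 * (κ + (deriv ρ x) ^ 2) :=
    (hc0.pow 2).mul (continuous_const.add (hρx.pow 2))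
  have key : (∫ x in (0:ℝ)..1, Bop κ lam ε (deriv ρ) v x * v x)
      = ∫ x in (0:ℝ)..1,
          (ε * (iteratedDeriv 2 w x) ^ 2 + lam * (deriv w x) ^ 2
            + (w x) ^ 2 * (κ + (deriv ρ x) ^ 2)) := by
    rw [intervalIntegral.integral_congr (g := fun x =>
      ε * (w x * iteratedDeriv 4 w x) - lam * (w x * iteratedDeriv 2 w x)
        + (w x) ^ 2 * (κ + (deriv ρ x) ^ 2)) (fun x _ => hpt x)]
    rw [intervalIntegral.integral_add (by
        exact ((continuous_const.mul (hc0.mul hc4)).sub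
          (continuous_const.mul (hc0.mul hc2))).intervalIntegrable _ _)
      (hInt0.intervalIntegrable _ _),
      intervalIntegral.integral_sub
        (by exact (continuous_const.mul (hc0.mul hc4)).intervalIntegrable _ _)
        (by exact (continuous_const.mul (hc0.mul hc2)).intervalIntegrable _ _),
      intervalIntegral.integral_const_mul, intervalIntegral.integral_const_mul,
      ibp1, ibp2]
    rw [intervalIntegral.integral_add (by
        exact ((continuous_const.mul (hc2.pow 2)).add
          (continuous_const.mul (hc1.pow 2))).intervalIntegrable _ _)
      (hInt0.intervalIntegrable _ _),
      intervalIntegral.integral_add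
        (by exact (continuous_const.mul (hc2.pow 2)).intervalIntegrable _ _)
        (by exact (continuous_const.mul (hc1.pow 2)).intervalIntegrable _ _),
      intervalIntegral.integral_const_mul, intervalIntegral.integral_const_mul]
    ring
  -- nonnegativity of the integrand
  set f : ℝ → ℝ := fun x =>
      ε * (iteratedDeriv 2 w x) ^ 2 + lam * (deriv w x) ^ 2
        + (w x) ^ 2 * (κ + (deriv ρ x) ^ 2) with hf
  have hfc : Continuous f := by
    apply Continuous.add
    · exact (continuous_const.mul (hc2.pow 2)).add (continuous_const.mul (hc1.pow 2))
    · exact hInt0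
  have hfnn : ∀ x, 0 ≤ f x := by
    intro x
    have h1 : (0:ℝ) ≤ κ + (deriv ρ x) ^ 2 := by positivity
    have := sq_nonneg (w x)
    have := sq_nonneg (deriv w x)
    have := sq_nonneg (iteratedDeriv 2 w x)
    simp only [hf]
    nlinarith
  have hnn : 0 ≤ ∫ x in (0:ℝ)..1, f x :=
    intervalIntegral.integral_nonneg (by norm_num) (fun x _ => hfnn x)
  refine ⟨key, key ▸ hnn, ?_⟩
  constructor
  · -- integral zero implies v = 0 on [0,1]
    intro hI
    rw [key] at hI
    -- F t := ∫₀ᵗ f is identically 0 on [0,1]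
    set F : ℝ → ℝ := fun t => ∫ x in (0:ℝ)..t, f x with hFdef
    have hF0 : ∀ t ∈ Icc (0:ℝ) 1, F t = 0 := by
      intro t ht
      have h1 : 0 ≤ F t := intervalIntegral.integral_nonneg ht.1 (fun x _ => hfnn x)
      have h2 : F t + (∫ x in t..1, f x) = F 1 :=
        intervalIntegral.integral_add_adjacent_intervals
          (hfc.intervalIntegrable _ _) (hfc.intervalIntegrable _ _)
      have h3 : 0 ≤ ∫ x in t..1, f x :=
        intervalIntegral.integral_nonneg ht.2 (fun x _ => hfnn x)
      have h4 : F 1 = 0 := hI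
      linarith
    -- f = 0 on Ioo 0 1 since F ≡ 0 there (open set)
    have hfIoo : EqOn f (fun _ => (0:ℝ)) (Ioo (0:ℝ) 1) := by
      intro x hx
      have hFd : HasDerivAt F (f x) x :=
        intervalIntegral.integral_hasDerivAt_right (hfc.intervalIntegrable _ _)
          (hfc.stronglyMeasurableAtFilter _ _) hfc.continuousAt
      have hEv : F =ᶠ[nhds x] (fun _ => (0:ℝ)) := by
        filter_upwards [isOpen_Ioo.mem_nhds hx] with y hy
        exact hF0 y ⟨le_of_lt hy.1, le_of_lt hy.2⟩
      have : deriv F x = deriv (fun _ => (0:ℝ)) x := hEv.deriv_eq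
      rw [hFd.deriv, deriv_const] at this
      exact this
    have hfIcc : EqOn f (fun _ => (0:ℝ)) (Icc (0:ℝ) 1) := by
      have := hfIoo.closure hfc continuous_const
      rwa [closure_Ioo (by norm_num : (0:ℝ) ≠ 1)] at this
    intro x hx
    have hfx : f x = 0 := hfIcc hx
    have hρne := hρxne x hx
    have hw2 : (w x) ^ 2 ≤ 0 := by
      have h1 : (0:ℝ) < κ + (deriv ρ x) ^ 2 := by positivity
      have := sq_nonneg (deriv w x)
      have := sq_nonneg (iteratedDeriv 2 w x)
      have := sq_nonneg (w x)
      simp only [hf] at hfx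
      nlinarith
    have hwx : w x = 0 := by
      have : (w x) ^ 2 = 0 := le_antisymm hw2 (sq_nonneg _)
      exact pow_eq_zero_iff (by norm_num) |>.mp this
    have : v x / deriv ρ x = 0 := hwx
    field_simp at this
    simpa using this
  · -- v = 0 on [0,1] implies integral zero
    intro hz
    rw [intervalIntegral.integral_congr (g := fun _ => (0:ℝ)) ?_,
      intervalIntegral.integral_zero]
    intro x hx
    rw [uIcc_of_le (by norm_num : (0:ℝ) ≤ 1)] at hx
    simp [hz x hx]
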